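/- (Theorem 1) Fix λ > 0 and let S be a nonnegative real-valued random variable with finite expectation E[S]. For t > 0 set X(t) := (1/t) ∫₀ᵗ ℙ(S > s) ds, and for each natural number i define p_i(t) := ∑_{n=i}^{∞} e^{-λt} (λt)^n / n! · (n choose i) X(t)^i (1 − X(t))^{n−i}. Then for every natural number i, lim_{t→∞} p_i(t) = e^{-λ E[S]} (λ E[S])^i / i!. That is, the limiting distribution of the system size is Poisson with parameter λ E[S]. -/

import Mathlib

open MeasureTheory Filter

lemma real_exp_tsum (y : ℝ) : ∑' n : ℕ, y ^ n / (Nat.factorial n : ℝ) = Real.exp y := by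
  rw [Real.exp_eq_exp_ℝ, NormedSpace.exp_eq_tsum_div]

lemma poisson_thinning (a x : ℝ) (i : ℕ) :
    (∑' n : {n : ℕ // i ≤ n},
        Real.exp (-a) * a ^ (n : ℕ) / (Nat.factorial (n : ℕ)) *
          ((Nat.choose (n : ℕ) i : ℝ) * x ^ i * (1 - x) ^ ((n : ℕ) - i)))
      = Real.exp (-(a * x)) * (a * x) ^ i / (Nat.factorial i) := by
  let e : ℕ ≃ {n : ℕ // i ≤ n} :=
    { toFun := fun k => ⟨i + k, Nat.le_add_right i k⟩
      invFun := fun n => (n : ℕ) - i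
      left_inv := fun k => by simp
      right_inv := fun n => by
        ext; simpa using Nat.add_sub_cancel' n.2 }
  rw [← e.tsum_eq]
  have hterm : ∀ k : ℕ,
      Real.exp (-a) * a ^ (i + k) / (Nat.factorial (i + k)) *
          ((Nat.choose (i + k) i : ℝ) * x ^ i * (1 - x) ^ (i + k - i))
        = (Real.exp (-a) * (a * x) ^ i / (Nat.factorial i)) *
            ((a * (1 - x)) ^ k / (Nat.factorial k)) := by
    intro k
    have hfac : ((Nat.factorial (i + k) : ℝ)) =
        (Nat.choose (i + k) i : ℝ) * (Nat.factorial k) * (Nat.factorial i) := by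
      rw [add_comm i k]
      exact_mod_cast (Nat.add_choose_mul_factorial_mul_factorial k i).symm
    have h1 : (Nat.factorial (i + k) : ℝ) ≠ 0 := by positivity
    have h2 : (Nat.factorial i : ℝ) ≠ 0 := by positivity
    have h3 : (Nat.factorial k : ℝ) ≠ 0 := by positivity
    have h4 : (Nat.choose (i + k) i : ℝ) ≠ 0 := by
      have := Nat.choose_pos (Nat.le_add_right i k)
      positivity
    simp only [Nat.add_sub_cancel_left, mul_pow, pow_add]
    field_simp
    rw [hfac]; ring
  calc (∑' k : ℕ, Real.exp (-a) * a ^ (((e k) : {n : ℕ // i ≤ n}) : ℕ) /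
            (Nat.factorial ((e k : {n : ℕ // i ≤ n}) : ℕ)) *
          ((Nat.choose ((e k : {n : ℕ // i ≤ n}) : ℕ) i : ℝ) * x ^ i *
            (1 - x) ^ (((e k : {n : ℕ // i ≤ n}) : ℕ) - i)))
      = ∑' k : ℕ, (Real.exp (-a) * (a * x) ^ i / (Nat.factorial i)) *
            ((a * (1 - x)) ^ k / (Nat.factorial k)) := by
        apply tsum_congr; intro k
        show Real.exp (-a) * a ^ (i + k) / (Nat.factorial (i + k)) *
          ((Nat.choose (i + k) i : ℝ) * x ^ i * (1 - x) ^ (i + k - i)) = _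
        exact hterm k
    _ = (Real.exp (-a) * (a * x) ^ i / (Nat.factorial i)) * Real.exp (a * (1 - x)) := by
        rw [tsum_mul_left, real_exp_tsum]
    _ = Real.exp (-(a * x)) * (a * x) ^ i / (Nat.factorial i) := by
        have hxp : Real.exp (a * (1 - x)) * Real.exp (-a) = Real.exp (-(a * x)) := by
          rw [← Real.exp_add]; ring_nf
        rw [div_mul_eq_mul_div, mul_comm (Real.exp (-a) * (a * x) ^ i), ← mul_assoc, hxp]

/-- (Theorem 1) Fix `λ > 0` and let `S` be a nonnegative random variable with
distribution `μ` and finite expectation `E[S] = ∫ x dμ`.  For `t > 0` set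
`X(t) = (1/t) ∫₀ᵗ ℙ(S > s) ds`, and for each `i : ℕ` let
`p_i(t) = ∑_{n=i}^∞ e^{-λt} (λt)^n / n! · (n choose i) X(t)^i (1 - X(t))^{n-i}`.
Then for every `i`, `p_i(t) → e^{-λE[S]} (λE[S])^i / i!` as `t → ∞`:
the limiting distribution of the system size is Poisson with parameter `λ E[S]`. -/
theorem limiting_distribution_poisson (l : ℝ) (hl : 0 < l)
    (μ : Measure ℝ) [IsProbabilityMeasure μ] (hμ : μ (Set.Iio 0) = 0)
    (hint : Integrable (fun x : ℝ => x) μ)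
    (X : ℝ → ℝ) (hX : ∀ t, X t = (1 / t) * ∫ s in (0 : ℝ)..t, (μ (Set.Ioi s)).toReal)
    (p : ℕ → ℝ → ℝ)
    (hp : ∀ i t, p i t =
      ∑' n : {n : ℕ // i ≤ n},
        Real.exp (-(l * t)) * (l * t) ^ (n : ℕ) / (Nat.factorial (n : ℕ)) *
          ((Nat.choose (n : ℕ) i : ℝ) * X t ^ i * (1 - X t) ^ ((n : ℕ) - i))) :
    ∀ i : ℕ,
      Tendsto (fun t : ℝ => p i t) atTop
        (nhds (Real.exp (-(l * ∫ x, x ∂μ)) * (l * ∫ x, x ∂μ) ^ i /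
          (Nat.factorial i))) := by
  intro i
  set g : ℝ → ℝ := fun s => (μ (Set.Ioi s)).toReal with hg
  have hnn : 0 ≤ᵐ[μ] fun x : ℝ => x := by
    have : ∀ᵐ x ∂μ, x ∉ Set.Iio 0 := (ae_iff).mpr (by simpa using (show μ {a : ℝ | a < 0} = 0 from hμ))
    filter_upwards [this] with x hx
    simpa using hx
  -- layer cake formula
  have hlayer : ∫ x, x ∂μ = ∫ s in Set.Ioi (0:ℝ), g s := by
    rw [hint.integral_eq_integral_meas_lt hnn]
    apply setIntegral_congr_fun measurableSet_Ioi
    intro s _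
    simp [hg, Set.Ioi]
    rfl
  -- integrability of g on Ioi 0
  have hmeas : Measurable fun s : ℝ => μ (Set.Ioi s) :=
    Antitone.measurable (fun s t hst => measure_mono (Set.Ioi_subset_Ioi hst))
  have hlint : ∫⁻ s in Set.Ioi (0:ℝ), μ (Set.Ioi s) ≠ ⊤ := by
    have key := lintegral_eq_lintegral_meas_lt μ hnn hint.aemeasurable
    have : ∫⁻ x, ENNReal.ofReal x ∂μ < ⊤ := hint.lintegral_lt_top
    rw [key] at this
    have heq : ∀ s : ℝ, {a : ℝ | s < a} = Set.Ioi s := fun s => rfl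
    simpa [heq] using this.ne
  have hgint : IntegrableOn g (Set.Ioi (0:ℝ)) := by
    exact integrable_toReal_of_lintegral_ne_top hmeas.aemeasurable.restrict hlint
  have htend : Tendsto (fun t : ℝ => ∫ s in (0:ℝ)..t, g s) atTop
      (nhds (∫ x, x ∂μ)) := by
    rw [hlayer]
    exact intervalIntegral_tendsto_integral_Ioi 0 hgint tendsto_id
  -- continuous function F
  have hcont : Continuous fun y : ℝ =>
      Real.exp (-(l * y)) * (l * y) ^ i / (Nat.factorial i) := by
    fun_prop
  have hcomp := (hcont.tendsto _).comp htend
  apply hcomp.congr'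
  filter_upwards [eventually_gt_atTop (0:ℝ)] with t ht
  rw [hp i t, poisson_thinning]
  have : l * t * X t = l * ∫ s in (0:ℝ)..t, g s := by
    rw [hX t]
    field_simp
  simp only [Function.comp]
  rw [this]
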